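/- If m > 1 is odd, then the coefficient of x^m in (x/log(1+x))^m equals B_m/m!, where B_m is the m-th Bernoulli number; combined with the vanishing of odd Bernoulli numbers B_m = 0 for odd m > 1, this coefficient is 0. -/

import Mathlib

open PowerSeries

noncomputable def ell : PowerSeries ℚ := PowerSeries.mk fun i => (-1)^i / (i+1)

namespace EllAux

noncomputable def g : PowerSeries ℚ := X * ell
noncomputable def S : PowerSeries ℚ := PowerSeries.mk fun n => (-1 : ℚ)^n

lemma coeff_ell (n : ℕ) : coeff (R := ℚ) n ell = (-1)^n / (n+1) := coeff_mk _ _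

lemma constantCoeff_ell : constantCoeff (R := ℚ) ell = 1 := by
  rw [← coeff_zero_eq_constantCoeff_apply, coeff_ell]; norm_num

lemma constantCoeff_ell_ne : constantCoeff (R := ℚ) ell ≠ 0 := by
  rw [constantCoeff_ell]; norm_num

lemma deriv_g : d⁄dX ℚ g = S := by
  ext n
  rw [coeff_derivative, g, coeff_succ_X_mul, coeff_ell, S, coeff_mk]
  have : (n:ℚ) + 1 ≠ 0 := by positivity
  field_simp

lemma one_add_X_mul_S : (1 + X) * S = 1 := by
  ext n
  rw [add_mul, one_mul, map_add]
  cases n with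
  | zero => simp [S]
  | succ n => simp [S, coeff_succ_X_mul, coeff_mk, pow_succ]

lemma S_eq : S = ell + X * d⁄dX ℚ ell := by
  rw [← deriv_g, g, Derivation.leibniz, derivative_X, smul_eq_mul, smul_eq_mul, mul_one]
  ring

/-! ### Composition with g -/

lemma coeff_eq_of_dvd {A B : PowerSeries ℚ} {j i : ℕ} (h : (X : PowerSeries ℚ)^(j+1) ∣ A - B)
    (hij : i ≤ j) : coeff (R := ℚ) i A = coeff (R := ℚ) i B := by
  have h0 := (X_pow_dvd_iff.mp h) i (by omega)
  rw [map_sub, sub_eq_zero] at h0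
  exact h0

lemma dvd_aeval_sub {P Q : Polynomial ℚ} {j : ℕ} (h : (Polynomial.X : Polynomial ℚ)^(j+1) ∣ P - Q) :
    (X : PowerSeries ℚ)^(j+1) ∣ Polynomial.aeval g P - Polynomial.aeval g Q := by
  obtain ⟨R, hR⟩ := h
  have : Polynomial.aeval g P - Polynomial.aeval g Q = Polynomial.aeval g (P - Q) := by
    rw [map_sub]
  rw [this, hR, map_mul, map_pow, Polynomial.aeval_X, g, mul_pow]
  exact Dvd.dvd.mul_right (dvd_mul_right _ _) _

lemma dvd_of_low_coeff_eq {P Q : Polynomial ℚ} {j : ℕ} (h : ∀ i ≤ j, P.coeff i = Q.coeff i) :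
    (Polynomial.X : Polynomial ℚ)^(j+1) ∣ P - Q :=
  Polynomial.X_pow_dvd_iff.mpr fun d hd => by
    rw [Polynomial.coeff_sub, h d (by omega), sub_self]

noncomputable def cmp (F : PowerSeries ℚ) : PowerSeries ℚ :=
  PowerSeries.mk fun j => coeff (R := ℚ) j (Polynomial.aeval g (trunc (j+1) F))

lemma coeff_cmp {F : PowerSeries ℚ} {j N : ℕ} (h : j < N) :
    coeff (R := ℚ) j (cmp F) = coeff (R := ℚ) j (Polynomial.aeval g (trunc N F)) := by
  rw [cmp, coeff_mk]
  refine coeff_eq_of_dvd (dvd_aeval_sub (dvd_of_low_coeff_eq fun i hi => ?_)) le_rfl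
  rw [coeff_trunc, coeff_trunc, if_pos (by omega), if_pos (by omega)]

lemma coeff_cmp_mul {F A : PowerSeries ℚ} {j N : ℕ} (h : j < N) :
    coeff (R := ℚ) j (cmp F * A) = coeff (R := ℚ) j (Polynomial.aeval g (trunc N F) * A) := by
  rw [coeff_mul, coeff_mul]
  refine Finset.sum_congr rfl fun p hp => ?_
  rw [Finset.HasAntidiagonal.mem_antidiagonal] at hp
  rw [coeff_cmp (show p.1 < N by omega)]

lemma coeff_mul_cmp {G A : PowerSeries ℚ} {j N : ℕ} (h : j < N) :
    coeff (R := ℚ) j (A * cmp G) = coeff (R := ℚ) j (A * Polynomial.aeval g (trunc N G)) := by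
  rw [coeff_mul, coeff_mul]
  refine Finset.sum_congr rfl fun p hp => ?_
  rw [Finset.HasAntidiagonal.mem_antidiagonal] at hp
  rw [coeff_cmp (show p.2 < N by omega)]

lemma cmp_zero : cmp 0 = 0 := by
  ext j; simp [cmp, map_zero]

lemma cmp_add (F G : PowerSeries ℚ) : cmp (F + G) = cmp F + cmp G := by
  ext j; simp [cmp, map_add]

lemma cmp_one : cmp 1 = 1 := by
  ext j; rw [cmp, coeff_mk, trunc_one, Polynomial.aeval_one]

lemma cmp_X : cmp X = g := by
  ext j
  rw [coeff_cmp (show j < j + 2 by omega), trunc_X, Polynomial.aeval_X]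

lemma cmp_mul (F G : PowerSeries ℚ) : cmp (F * G) = cmp F * cmp G := by
  ext j
  rw [coeff_cmp (j.lt_succ_self), coeff_cmp_mul (j.lt_succ_self),
    coeff_mul_cmp (j.lt_succ_self), ← map_mul]
  refine coeff_eq_of_dvd (dvd_aeval_sub (dvd_of_low_coeff_eq fun i hi => ?_)) le_rfl
  rw [coeff_trunc, if_pos (by omega)]
  rw [← Polynomial.coeff_coe, Polynomial.coe_mul]
  exact coeff_mul_eq_coeff_trunc_mul_trunc (n := j+1) F G (by omega)

lemma deriv_aeval (P : Polynomial ℚ) :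
    d⁄dX ℚ (Polynomial.aeval g P) = Polynomial.aeval g (Polynomial.derivative P) * S := by
  induction P using Polynomial.induction_on' with
  | add p q hp hq => simp [hp, hq, add_mul]
  | monomial n a =>
    have hC : ∀ b : ℚ, algebraMap ℚ (PowerSeries ℚ) b = C (R := ℚ) b := fun b => by
      rw [PowerSeries.algebraMap_apply, Algebra.algebraMap_self_apply]
    rw [Polynomial.aeval_monomial, Polynomial.derivative_monomial, Polynomial.aeval_monomial,
      hC, hC, Derivation.leibniz, Derivation.leibniz_pow, deriv_g, derivative_C]
    simp only [smul_eq_mul, nsmul_eq_mul, mul_zero, smul_zero, add_zero, map_mul,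
      map_natCast]
    ring

lemma cmp_deriv (F : PowerSeries ℚ) : d⁄dX ℚ (cmp F) = cmp (d⁄dX ℚ F) * S := by
  ext j
  rw [coeff_derivative, coeff_cmp (show j + 1 < j + 2 by omega), ← coeff_derivative,
    deriv_aeval, ← trunc_derivative, ← coeff_cmp_mul (j.lt_succ_self)]


/-! ### ODE uniqueness and the composition identities -/

lemma ode_unique {u v : PowerSeries ℚ} (hu : (1 + X) * d⁄dX ℚ u = u)
    (hv : (1 + X) * d⁄dX ℚ v = v) (h0 : constantCoeff (R := ℚ) u = constantCoeff (R := ℚ) v) : u = v := by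
  have hD : (1 + X) * d⁄dX ℚ (u - v) = u - v := by
    rw [map_sub, mul_sub, hu, hv]
  have h0D : constantCoeff (R := ℚ) (u - v) = 0 := by rw [map_sub, h0, sub_self]
  set D := u - v with hDdef
  have hdvd : ∀ n : ℕ, (X : PowerSeries ℚ)^n ∣ D := by
    intro n
    induction n with
    | zero => simp
    | succ n ih =>
      obtain ⟨E, hE⟩ := ih
      rcases n with _ | k
      · rw [pow_one]
        exact X_dvd_iff.mpr h0D
      · -- D = X^(k+1) * E
        have hder : d⁄dX ℚ D = X^(k+1) * d⁄dX ℚ E + ((k:ℚ⟦X⟧) + 1) * X^k * E := by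
          rw [hE, Derivation.leibniz, Derivation.leibniz_pow, derivative_X, Nat.succ_sub_one]
          simp only [smul_eq_mul, nsmul_eq_mul, mul_one]
          push_cast
          ring
        have key : (X : PowerSeries ℚ)^k *
            ((1 + X) * (X * d⁄dX ℚ E + ((k:ℚ⟦X⟧) + 1) * E) - X * E) = 0 := by
          have := hD
          rw [hder, hE] at this
          have h2 : (X:ℚ⟦X⟧)^(k+1) = X^k * X := by ring
          calc (X : PowerSeries ℚ)^k *
              ((1 + X) * (X * d⁄dX ℚ E + ((k:ℚ⟦X⟧) + 1) * E) - X * E)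
              = (1 + X) * (X^(k+1) * d⁄dX ℚ E + ((k:ℚ⟦X⟧) + 1) * X^k * E) - X^(k+1) * E := by
                ring
            _ = 0 := by rw [this]; ring
        have hbr : (1 + X) * (X * d⁄dX ℚ E + ((k:ℚ⟦X⟧) + 1) * E) - X * E = 0 :=
          (mul_eq_zero.mp key).resolve_left (pow_ne_zero _ X_ne_zero)
        have hE0 : constantCoeff (R := ℚ) E = 0 := by
          have h4 := congrArg (constantCoeff (R := ℚ)) hbr
          have h3 : ((k:ℚ) + 1) * constantCoeff (R := ℚ) E = 0 := by
            simpa using h4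
          have hk1 : ((k:ℚ) + 1) ≠ 0 := by positivity
          exact (mul_eq_zero.mp h3).resolve_left hk1
        obtain ⟨E', hE'⟩ := X_dvd_iff.mpr hE0
        exact ⟨E', by rw [hE, hE', pow_succ]; ring⟩
  have : D = 0 := by
    ext i
    rw [map_zero]
    exact X_pow_dvd_iff.mp (hdvd (i+1)) i (by omega)
  exact sub_eq_zero.mp this

lemma deriv_exp : d⁄dX ℚ (exp ℚ) = exp ℚ := by
  ext n
  rw [coeff_derivative, coeff_exp, coeff_exp]
  simp only [Algebra.algebraMap_self_apply]
  rw [Nat.factorial_succ]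
  have h1 : ((n+1 : ℕ) : ℚ) ≠ 0 := by positivity
  have h2 : ((n.factorial : ℕ) : ℚ) ≠ 0 := Nat.cast_ne_zero.mpr n.factorial_ne_zero
  field_simp
  push_cast; ring

lemma cmp_exp : cmp (exp ℚ) = 1 + X := by
  apply ode_unique
  · rw [cmp_deriv, deriv_exp]
    calc (1 + X) * (cmp (exp ℚ) * S) = cmp (exp ℚ) * ((1 + X) * S) := by ring
      _ = cmp (exp ℚ) := by rw [one_add_X_mul_S, mul_one]
  · rw [map_add, derivative_X]
    simp
  · rw [← coeff_zero_eq_constantCoeff_apply, ← coeff_zero_eq_constantCoeff_apply,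
      cmp, coeff_mk]
    have ht : trunc 1 (exp ℚ) = Polynomial.C 1 := by
      ext d
      rw [coeff_trunc, Polynomial.coeff_C]
      rcases Nat.eq_zero_or_pos d with h | h
      · subst h; simp [coeff_exp]
      · rw [if_neg (by omega), if_neg (by omega)]
    rw [ht]
    simp

lemma cmp_sub (F G : PowerSeries ℚ) : cmp (F - G) = cmp F - cmp G := by
  have := cmp_add (F - G) G
  rw [sub_add_cancel] at this
  rw [this]; ring

lemma cmp_bern : cmp (bernoulliPowerSeries ℚ) = ell := by
  have h := congrArg cmp (bernoulliPowerSeries_mul_exp_sub_one ℚ)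
  rw [cmp_mul, cmp_sub, cmp_exp, cmp_one, cmp_X, g] at h
  have h2 : X * cmp (bernoulliPowerSeries ℚ) = X * ell := by
    calc X * cmp (bernoulliPowerSeries ℚ)
        = cmp (bernoulliPowerSeries ℚ) * (1 + X - 1) := by ring
      _ = X * ell := h
  exact mul_left_cancel₀ X_ne_zero h2


/-! ### Residue lemma -/

lemma ell_mul_inv : ell * ell⁻¹ = 1 :=
  PowerSeries.mul_inv_cancel _ constantCoeff_ell_ne

lemma resid (k' : ℕ) : coeff (R := ℚ) (k'+1) ((ell⁻¹)^(k'+2) * S) = 0 := by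
  set k := k' + 1 with hk
  have hkQ : ((k:ℚ)) ≠ 0 := by positivity
  -- derivative of ell⁻¹ ^ k
  have hdk : d⁄dX ℚ ((ell⁻¹)^k) = -((k:ℚ⟦X⟧) * (d⁄dX ℚ ell * (ell⁻¹)^(k+1))) := by
    rw [Derivation.leibniz_pow, derivative_inv']
    simp only [smul_eq_mul, nsmul_eq_mul, hk, Nat.add_sub_cancel]
    push_cast
    ring
  -- key decomposition
  have key : (ell⁻¹)^(k+1) * S
      = (ell⁻¹)^k + ((-1 : ℚ)/k) • (X * d⁄dX ℚ ((ell⁻¹)^k)) := by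
    rw [S_eq, hdk, smul_eq_C_mul]
    have hC : (C (R := ℚ)) ((-1:ℚ)/k) * (k : ℚ⟦X⟧) = -1 := by
      have : ((k : ℚ⟦X⟧)) = C (R := ℚ) (k : ℚ) := (map_natCast (C (R := ℚ)) k).symm
      rw [this, ← map_mul]
      field_simp
      rw [map_neg, map_one]
    calc (ell⁻¹)^(k+1) * (ell + X * d⁄dX ℚ ell)
        = (ell⁻¹)^k * (ell * ell⁻¹) + X * d⁄dX ℚ ell * (ell⁻¹)^(k+1) := by ring
      _ = (ell⁻¹)^k + X * d⁄dX ℚ ell * (ell⁻¹)^(k+1) := by rw [ell_mul_inv, mul_one]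
      _ = (ell⁻¹)^k + (C (R := ℚ)) ((-1:ℚ)/k) * (X * -((k:ℚ⟦X⟧) * (d⁄dX ℚ ell * (ell⁻¹)^(k+1)))) := by
          rw [show (C (R := ℚ)) ((-1:ℚ)/k) * (X * -((k:ℚ⟦X⟧) * (d⁄dX ℚ ell * (ell⁻¹)^(k+1))))
              = ((C (R := ℚ)) ((-1:ℚ)/k) * (k : ℚ⟦X⟧)) * (-(X * (d⁄dX ℚ ell * (ell⁻¹)^(k+1)))) by ring,
            hC]
          ring
  rw [show k' + 2 = k + 1 by omega, key, map_add, map_smul]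
  rw [show k' + 1 = k by omega] at *
  have hX : coeff (R := ℚ) k (X * d⁄dX ℚ ((ell⁻¹)^k)) = coeff (R := ℚ) k ((ell⁻¹)^k) * k := by
    rw [hk, coeff_succ_X_mul, coeff_derivative]
    push_cast
    simp only [k]; push_cast; ring
  rw [hX]
  rw [smul_eq_mul]
  field_simp
  ring

end EllAux

theorem coeff_odd_eq_bernoulli (m : ℕ) (hodd : Odd m) (hm : 1 < m) :
    PowerSeries.coeff (R := ℚ) m (ell⁻¹ ^ m) = bernoulli m / m.factorial ∧
      PowerSeries.coeff (R := ℚ) m (ell⁻¹ ^ m) = 0 := by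
  open EllAux in
  have hb0 : bernoulli m = 0 := by
    rw [bernoulli_eq_bernoulli'_of_ne_one (by omega)]
    exact bernoulli'_eq_zero_of_odd hodd hm
  have hinv : ell * ell⁻¹ = 1 := ell_mul_inv
  set V : PowerSeries ℚ := X + bernoulliPowerSeries ℚ with hV
  have hcmpV : cmp V = (1 + X) * ell := by
    rw [hV, cmp_add, cmp_X, cmp_bern, g]; ring
  set A : PowerSeries ℚ := (ell⁻¹)^(m+1) * S with hA
  have hmain : (ell⁻¹ : PowerSeries ℚ) ^ m = cmp V * A := by
    rw [hcmpV, hA]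
    exact (calc (1 + X) * ell * ((ell⁻¹)^(m+1) * S)
        = (ell⁻¹)^m * (ell * ell⁻¹) * ((1 + X) * S) := by ring
      _ = (ell⁻¹)^m := by rw [hinv, one_add_X_mul_S]; ring).symm
  rw [hmain]
  have step : coeff (R := ℚ) m (cmp V * A)
      = ∑ n ∈ Finset.range (m+1), coeff (R := ℚ) n V * coeff (R := ℚ) m ((X * ell)^n * A) := by
    rw [coeff_cmp_mul (m.lt_succ_self)]
    have ht : (Polynomial.aeval g (trunc (m+1) V) : PowerSeries ℚ)
        = ∑ n ∈ Finset.range (m+1), C (R := ℚ) (coeff (R := ℚ) n V) * (X * ell)^n := by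
      rw [trunc_apply, map_sum]
      refine Finset.sum_congr (by rw [Finset.range_eq_Ico]) fun n hn => ?_
      rw [Polynomial.aeval_monomial, PowerSeries.algebraMap_apply, Algebra.algebraMap_self_apply]
      rfl
    rw [ht, Finset.sum_mul, map_sum]
    refine Finset.sum_congr rfl fun n hn => ?_
    rw [mul_assoc, coeff_C_mul]
  rw [step]
  have hsum : ∑ n ∈ Finset.range (m+1), coeff (R := ℚ) n V * coeff (R := ℚ) m ((X * ell)^n * A)
      = coeff (R := ℚ) m V := by
    rw [Finset.sum_eq_single m]
    · -- n = m term
      have hXpow : (X * ell)^m * A = X^m * (ell^m * A) := by rw [mul_pow]; ring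
      have hpows : ell^m * A = ell⁻¹ * S := by
        rw [hA, pow_succ]
        calc ell^m * ((ell⁻¹)^m * ell⁻¹ * S) = (ell * ell⁻¹)^m * (ell⁻¹ * S) := by
              rw [mul_pow]; ring
          _ = ell⁻¹ * S := by rw [hinv, one_pow, one_mul]
      rw [hXpow, hpows]
      have : coeff (R := ℚ) m ((X:ℚ⟦X⟧)^m * (ell⁻¹ * S)) = coeff (R := ℚ) 0 (ell⁻¹ * S) := by
        have := coeff_X_pow_mul (ell⁻¹ * S) m 0
        simpa using this
      rw [this]
      have hc : coeff (R := ℚ) 0 (ell⁻¹ * S) = 1 := by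
        rw [coeff_zero_eq_constantCoeff_apply, map_mul, constantCoeff_inv, constantCoeff_ell]
        have : constantCoeff (R := ℚ) S = 1 := by
          rw [← coeff_zero_eq_constantCoeff_apply, S, coeff_mk]; norm_num
        rw [this]; norm_num
      rw [hc, mul_one]
    · -- other terms vanish
      intro n hn hne
      rw [Finset.mem_range] at hn
      obtain ⟨d, rfl⟩ : ∃ d, m = n + (d + 1) := ⟨m - n - 1, by omega⟩
      have hXpow : (X * ell)^n * A = X^n * (ell^n * A) := by rw [mul_pow]; ring
      have hpows : ell^n * A = (ell⁻¹)^(d+2) * S := by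
        rw [hA, show n + (d+1) + 1 = n + (d + 2) by omega, pow_add]
        calc ell^n * ((ell⁻¹)^n * (ell⁻¹)^(d+2) * S) = (ell * ell⁻¹)^n * ((ell⁻¹)^(d+2) * S) := by
              rw [mul_pow]; ring
          _ = (ell⁻¹)^(d+2) * S := by rw [hinv, one_pow, one_mul]
      rw [hXpow, hpows]
      have hc := coeff_X_pow_mul ((ell⁻¹)^(d+2) * S) n (d+1)
      rw [show n + (d+1) = d + 1 + n by omega, hc, resid d, mul_zero]
    · intro h
      exact absurd (Finset.self_mem_range_succ m) h
  rw [hsum, hV, map_add]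
  have hXm : coeff (R := ℚ) m (X : PowerSeries ℚ) = 0 := by
    rw [coeff_X, if_neg (by omega)]
  have hBm : coeff (R := ℚ) m (bernoulliPowerSeries ℚ) = bernoulli m / m.factorial := by
    rw [bernoulliPowerSeries, coeff_mk, Algebra.algebraMap_self_apply]
  rw [hXm, hBm, zero_add]
  exact ⟨rfl, by rw [hb0]; simp⟩
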